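/- Let μ and ν be Borel probability measures on ℝ^d with finite second moment, let f : ℝ^d → ℝ be a convex function of at most linear growth, let ∇f : ℝ^d → ℝ^d be a Borel measurable map with ∇f(x) ∈ ∂f(x) (the subdifferential of f at x) for every x, and set ρ := (∇f)_# μ, the pushforward of μ under ∇f. Suppose (X,Y) are ℝ^d-valued random variables on some probability space such that X has law μ and the law of (∇f(X), Y) is an optimal coupling for W₂²(ρ, ν) (in particular Y has law ν). Then ½ ( W₂²(μ,ρ) − W₂²(ν,ρ) − E[|X|²] + E[|Y|²] ) ≤ ∫ f dν − ∫ f dμ. -/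

import Mathlib

open MeasureTheory

/-- The squared 2-Wasserstein distance between two measures on `ℝ^d`:
the infimum of `∫ ‖x - y‖²` over all couplings. -/
noncomputable def W2sq {d : ℕ}
    (μ ν : Measure (EuclideanSpace ℝ (Fin d))) : ℝ :=
  sInf { r : ℝ | ∃ π : Measure (EuclideanSpace ℝ (Fin d) × EuclideanSpace ℝ (Fin d)),
    π.map Prod.fst = μ ∧ π.map Prod.snd = ν ∧ r = ∫ p, ‖p.1 - p.2‖ ^ 2 ∂π }

private lemma W2sq_bddBelow {d : ℕ} (μ ν : Measure (EuclideanSpace ℝ (Fin d))) :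
    BddBelow { r : ℝ | ∃ π : Measure (EuclideanSpace ℝ (Fin d) × EuclideanSpace ℝ (Fin d)),
      π.map Prod.fst = μ ∧ π.map Prod.snd = ν ∧ r = ∫ p, ‖p.1 - p.2‖ ^ 2 ∂π } := by
  refine ⟨0, ?_⟩
  rintro r ⟨π, -, -, rfl⟩
  exact integral_nonneg fun p => sq_nonneg _

private lemma W2sq_le_of_coupling {d : ℕ} {μ ν : Measure (EuclideanSpace ℝ (Fin d))}
    (π : Measure (EuclideanSpace ℝ (Fin d) × EuclideanSpace ℝ (Fin d)))
    (h1 : π.map Prod.fst = μ) (h2 : π.map Prod.snd = ν) :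
    W2sq μ ν ≤ ∫ p, ‖p.1 - p.2‖ ^ 2 ∂π :=
  csInf_le (W2sq_bddBelow μ ν) ⟨π, h1, h2, rfl⟩

private lemma W2sq_swap_le {d : ℕ} (μ ν : Measure (EuclideanSpace ℝ (Fin d)))
    [IsProbabilityMeasure μ] [IsProbabilityMeasure ν] :
    W2sq ν μ ≤ W2sq μ ν := by
  have hcont : Continuous fun p : EuclideanSpace ℝ (Fin d) × EuclideanSpace ℝ (Fin d) =>
      ‖p.1 - p.2‖ ^ 2 := (continuous_fst.sub continuous_snd).norm.pow 2
  unfold W2sq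
  apply le_csInf
  · exact ⟨∫ p, ‖p.1 - p.2‖ ^ 2 ∂(μ.prod ν), μ.prod ν, by simp, by simp, rfl⟩
  · rintro r ⟨π, h1, h2, rfl⟩
    have hle : W2sq ν μ ≤ ∫ p, ‖p.1 - p.2‖ ^ 2 ∂(π.map Prod.swap) := by
      apply W2sq_le_of_coupling
      · rw [Measure.map_map measurable_fst measurable_swap]; exact h2
      · rw [Measure.map_map measurable_snd measurable_swap]; exact h1
    have hmap : ∫ p, ‖p.1 - p.2‖ ^ 2 ∂(π.map Prod.swap) = ∫ p, ‖p.1 - p.2‖ ^ 2 ∂π := by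
      rw [integral_map measurable_swap.aemeasurable hcont.aestronglyMeasurable]
      exact integral_congr_ae (.of_forall fun p => by simp [norm_sub_rev])
    exact hmap ▸ hle

private lemma sq_norm_sub_le {E : Type*} [SeminormedAddCommGroup E] (a b : E) :
    ‖a - b‖ ^ 2 ≤ 2 * (‖a‖ ^ 2 + ‖b‖ ^ 2) := by
  have h := norm_sub_le a b
  nlinarith [norm_nonneg (a - b), norm_nonneg a, norm_nonneg b, sq_nonneg (‖a‖ - ‖b‖)]

theorem subgradient_coupling_estimate {d : ℕ}
    (μ ν : Measure (EuclideanSpace ℝ (Fin d)))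
    [IsProbabilityMeasure μ] [IsProbabilityMeasure ν]
    (hμ2 : Integrable (fun x => ‖x‖ ^ 2) μ)
    (hν2 : Integrable (fun x => ‖x‖ ^ 2) ν)
    (f : EuclideanSpace ℝ (Fin d) → ℝ) (hf : ConvexOn ℝ Set.univ f)
    (hlin : ∃ C : ℝ, ∀ x, |f x| ≤ C * (1 + ‖x‖))
    (gradf : EuclideanSpace ℝ (Fin d) → EuclideanSpace ℝ (Fin d))
    (hgrad_meas : Measurable gradf)
    (hsub : ∀ x y, f x + inner ℝ (gradf x) (y - x) ≤ f y)
    (ρ : Measure (EuclideanSpace ℝ (Fin d))) (hρ : ρ = μ.map gradf)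
    {Ω : Type*} [MeasurableSpace Ω] (P : Measure Ω) [IsProbabilityMeasure P]
    (X Y : Ω → EuclideanSpace ℝ (Fin d)) (hX : Measurable X) (hY : Measurable Y)
    (hXlaw : P.map X = μ)
    (hopt1 : (P.map fun ω => (gradf (X ω), Y ω)).map Prod.fst = ρ)
    (hopt2 : (P.map fun ω => (gradf (X ω), Y ω)).map Prod.snd = ν)
    (hopt : (∫ p, ‖p.1 - p.2‖ ^ 2 ∂(P.map fun ω => (gradf (X ω), Y ω))) = W2sq ρ ν) :
    (1 / 2 : ℝ) * (W2sq μ ρ - W2sq ν ρ - ∫ ω, ‖X ω‖ ^ 2 ∂P + ∫ ω, ‖Y ω‖ ^ 2 ∂P)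
      ≤ ∫ y, f y ∂ν - ∫ x, f x ∂μ := by
  obtain ⟨C, hC⟩ := hlin
  have hC0 : 0 ≤ C := by
    have h := hC 0
    simp at h
    linarith [abs_nonneg (f 0)]
  have hfc : Continuous f := by
    have h := ConvexOn.continuousOn isOpen_univ hf
    exact continuousOn_univ.mp h
  have hcont : Continuous fun p : EuclideanSpace ℝ (Fin d) × EuclideanSpace ℝ (Fin d) =>
      ‖p.1 - p.2‖ ^ 2 := (continuous_fst.sub continuous_snd).norm.pow 2
  -- subgradient growth bound
  have hgrad_bound : ∀ x, ‖gradf x‖ ≤ 3 * C * (1 + ‖x‖) := by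
    intro x
    rcases eq_or_ne (gradf x) 0 with h0 | h0
    · simp [h0]
      positivity
    · have hg : 0 < ‖gradf x‖ := norm_pos_iff.mpr h0
      have key := hsub x (x + ‖gradf x‖⁻¹ • gradf x)
      have hip : (inner ℝ (gradf x) ((x + ‖gradf x‖⁻¹ • gradf x) - x) : ℝ) = ‖gradf x‖ := by
        rw [add_sub_cancel_left, real_inner_smul_right, real_inner_self_eq_norm_sq, sq]
        field_simp
      rw [hip] at key
      have h2 : f (x + ‖gradf x‖⁻¹ • gradf x) ≤ C * (1 + ‖x + ‖gradf x‖⁻¹ • gradf x‖) :=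
        le_trans (le_abs_self _) (hC _)
      have h3 : ‖x + ‖gradf x‖⁻¹ • gradf x‖ ≤ ‖x‖ + 1 := by
        calc ‖x + ‖gradf x‖⁻¹ • gradf x‖ ≤ ‖x‖ + ‖‖gradf x‖⁻¹ • gradf x‖ := norm_add_le _ _
          _ = ‖x‖ + 1 := by
              rw [norm_smul, Real.norm_eq_abs, abs_of_nonneg (inv_nonneg.mpr hg.le),
                inv_mul_cancel₀ hg.ne']
      have h4 : -(C * (1 + ‖x‖)) ≤ f x := neg_le_of_abs_le (hC x)
      nlinarith [mul_nonneg hC0 (norm_nonneg x)]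
  -- measurability
  have hgX : Measurable fun ω => gradf (X ω) := hgrad_meas.comp hX
  have hpair : Measurable fun ω => (gradf (X ω), Y ω) := hgX.prodMk hY
  have hPY : P.map Y = ν := by
    have h := hopt2
    rw [Measure.map_map measurable_snd hpair] at h
    exact h
  haveI : IsProbabilityMeasure ρ := by
    rw [hρ]; exact Measure.isProbabilityMeasure_map hgrad_meas.aemeasurable
  -- second moments under P
  have hX2 : Integrable (fun ω => ‖X ω‖ ^ 2) P := by
    have h : Integrable (fun x => ‖x‖ ^ 2) (P.map X) := by rw [hXlaw]; exact hμ2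
    exact (integrable_map_measure (continuous_norm.pow 2).aestronglyMeasurable
      hX.aemeasurable).mp h
  have hY2 : Integrable (fun ω => ‖Y ω‖ ^ 2) P := by
    have h : Integrable (fun x => ‖x‖ ^ 2) (P.map Y) := by rw [hPY]; exact hν2
    exact (integrable_map_measure (continuous_norm.pow 2).aestronglyMeasurable
      hY.aemeasurable).mp h
  -- integrability of f ∘ X, f ∘ Y
  have habs : ∀ z : EuclideanSpace ℝ (Fin d), |f z| ≤ C * (2 + ‖z‖ ^ 2) := by
    intro z
    have h := hC z
    nlinarith [sq_nonneg (‖z‖ - 1), norm_nonneg z]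
  have hfX_int : Integrable (fun ω => f (X ω)) P := by
    refine Integrable.mono (((integrable_const (2 : ℝ)).add hX2).const_mul C)
      ((hfc.measurable.comp hX).aestronglyMeasurable) (.of_forall fun ω => ?_)
    simp only [Real.norm_eq_abs, Pi.add_apply]
    exact (habs (X ω)).trans (le_abs_self _)
  have hfY_int : Integrable (fun ω => f (Y ω)) P := by
    refine Integrable.mono (((integrable_const (2 : ℝ)).add hY2).const_mul C)
      ((hfc.measurable.comp hY).aestronglyMeasurable) (.of_forall fun ω => ?_)
    simp only [Real.norm_eq_abs, Pi.add_apply]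
    exact (habs (Y ω)).trans (le_abs_self _)
  -- integrability of ‖gradf(X)‖²
  have hG2 : Integrable (fun ω => ‖gradf (X ω)‖ ^ 2) P := by
    refine Integrable.mono (((integrable_const (1 : ℝ)).add hX2).const_mul (18 * C ^ 2))
      ((hgX.norm.pow_const 2).aestronglyMeasurable) (.of_forall fun ω => ?_)
    simp only [Real.norm_eq_abs, Pi.add_apply]
    have h1 : ‖gradf (X ω)‖ ^ 2 ≤ (3 * C * (1 + ‖X ω‖)) ^ 2 :=
      pow_le_pow_left₀ (norm_nonneg _) (hgrad_bound (X ω)) 2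
    have h2 : (3 * C * (1 + ‖X ω‖)) ^ 2 ≤ 18 * C ^ 2 * (1 + ‖X ω‖ ^ 2) := by
      nlinarith [mul_nonneg (sq_nonneg C) (sq_nonneg (‖X ω‖ - 1))]
    rw [abs_of_nonneg (sq_nonneg _), abs_of_nonneg]
    · exact h1.trans h2
    · positivity
  have hXg2 : Integrable (fun ω => ‖X ω - gradf (X ω)‖ ^ 2) P := by
    refine Integrable.mono ((hX2.add hG2).const_mul 2)
      (((hX.sub hgX).norm.pow_const 2).aestronglyMeasurable) (.of_forall fun ω => ?_)
    simp only [Real.norm_eq_abs, Pi.add_apply]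
    rw [abs_of_nonneg (sq_nonneg _), abs_of_nonneg (by positivity)]
    exact sq_norm_sub_le _ _
  have hYg2 : Integrable (fun ω => ‖Y ω - gradf (X ω)‖ ^ 2) P := by
    refine Integrable.mono ((hY2.add hG2).const_mul 2)
      (((hY.sub hgX).norm.pow_const 2).aestronglyMeasurable) (.of_forall fun ω => ?_)
    simp only [Real.norm_eq_abs, Pi.add_apply]
    rw [abs_of_nonneg (sq_nonneg _), abs_of_nonneg (by positivity)]
    exact sq_norm_sub_le _ _
  have hYX2 : Integrable (fun ω => ‖Y ω - X ω‖ ^ 2) P := by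
    refine Integrable.mono ((hY2.add hX2).const_mul 2)
      (((hY.sub hX).norm.pow_const 2).aestronglyMeasurable) (.of_forall fun ω => ?_)
    simp only [Real.norm_eq_abs, Pi.add_apply]
    rw [abs_of_nonneg (sq_nonneg _), abs_of_nonneg (by positivity)]
    exact sq_norm_sub_le _ _
  -- integrability of inner term
  have hInner : Integrable (fun ω => (inner ℝ (gradf (X ω)) (Y ω - X ω) : ℝ)) P := by
    refine Integrable.mono (hG2.add hYX2)
      ((Measurable.inner (𝕜 := ℝ) hgX (hY.sub hX)).aestronglyMeasurable)
      (.of_forall fun ω => ?_)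
    simp only [Real.norm_eq_abs, Pi.add_apply]
    have h1 : |(inner ℝ (gradf (X ω)) (Y ω - X ω) : ℝ)| ≤ ‖gradf (X ω)‖ * ‖Y ω - X ω‖ :=
      abs_real_inner_le_norm _ _
    have hnn : (0 : ℝ) ≤ ‖gradf (X ω)‖ ^ 2 + ‖Y ω - X ω‖ ^ 2 := by positivity
    rw [abs_of_nonneg hnn]
    nlinarith [norm_nonneg (gradf (X ω)), norm_nonneg (Y ω - X ω),
      sq_nonneg (‖gradf (X ω)‖ - ‖Y ω - X ω‖)]
  -- integrals of f
  have hfX_eq : ∫ x, f x ∂μ = ∫ ω, f (X ω) ∂P := by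
    rw [← hXlaw, integral_map hX.aemeasurable hfc.aestronglyMeasurable]
  have hfY_eq : ∫ y, f y ∂ν = ∫ ω, f (Y ω) ∂P := by
    rw [← hPY, integral_map hY.aemeasurable hfc.aestronglyMeasurable]
  -- subgradient inequality integrated
  have hint_le : ∫ ω, (inner ℝ (gradf (X ω)) (Y ω - X ω) : ℝ) ∂P
      ≤ ∫ ω, (f (Y ω) - f (X ω)) ∂P := by
    refine integral_mono hInner (hfY_int.sub hfX_int) fun ω => ?_
    have h := hsub (X ω) (Y ω)
    linarith
  rw [integral_sub hfY_int hfX_int] at hint_le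
  -- pointwise polarization identity
  have hid : ∀ ω, (inner ℝ (gradf (X ω)) (Y ω - X ω) : ℝ)
      = (1 / 2) * (‖Y ω‖ ^ 2 - ‖Y ω - gradf (X ω)‖ ^ 2 - ‖X ω‖ ^ 2
          + ‖X ω - gradf (X ω)‖ ^ 2) := by
    intro ω
    have h1 := norm_sub_sq_real (Y ω) (gradf (X ω))
    have h2 := norm_sub_sq_real (X ω) (gradf (X ω))
    have h3 : (inner ℝ (gradf (X ω)) (Y ω - X ω) : ℝ)
        = inner ℝ (Y ω) (gradf (X ω)) - inner ℝ (X ω) (gradf (X ω)) := by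
      rw [inner_sub_right, real_inner_comm (gradf (X ω)) (Y ω),
        real_inner_comm (gradf (X ω)) (X ω)]
    rw [h3, h1, h2]; ring
  have hEq : ∫ ω, (inner ℝ (gradf (X ω)) (Y ω - X ω) : ℝ) ∂P
      = (1 / 2) * ((∫ ω, ‖Y ω‖ ^ 2 ∂P) - (∫ ω, ‖Y ω - gradf (X ω)‖ ^ 2 ∂P)
          - (∫ ω, ‖X ω‖ ^ 2 ∂P) + (∫ ω, ‖X ω - gradf (X ω)‖ ^ 2 ∂P)) := by
    simp_rw [hid]
    rw [integral_const_mul]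
    congr 1
    have iYYg : Integrable (fun ω => ‖Y ω‖ ^ 2 - ‖Y ω - gradf (X ω)‖ ^ 2) P := hY2.sub hYg2
    have iA : Integrable (fun ω => ‖Y ω‖ ^ 2 - ‖Y ω - gradf (X ω)‖ ^ 2 - ‖X ω‖ ^ 2) P :=
      iYYg.sub hX2
    rw [integral_add iA hXg2, integral_sub iYYg hX2, integral_sub hY2 hYg2]
  -- Wasserstein bounds
  have hW1 : W2sq μ ρ ≤ ∫ ω, ‖X ω - gradf (X ω)‖ ^ 2 ∂P := by
    have hm : Measurable fun ω => (X ω, gradf (X ω)) := hX.prodMk hgX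
    have hle := W2sq_le_of_coupling (μ := μ) (ν := ρ) (P.map fun ω => (X ω, gradf (X ω)))
      (by rw [Measure.map_map measurable_fst hm]; exact hXlaw)
      (by rw [Measure.map_map measurable_snd hm, hρ, ← hXlaw,
            Measure.map_map hgrad_meas hX]; rfl)
    rwa [integral_map hm.aemeasurable hcont.aestronglyMeasurable] at hle
  have hW2 : ∫ ω, ‖Y ω - gradf (X ω)‖ ^ 2 ∂P = W2sq ρ ν := by
    rw [← hopt, integral_map hpair.aemeasurable hcont.aestronglyMeasurable]
    exact integral_congr_ae (.of_forall fun ω => by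
      show ‖Y ω - gradf (X ω)‖ ^ 2 = ‖gradf (X ω) - Y ω‖ ^ 2
      rw [norm_sub_rev])
  have hW3 : W2sq ρ ν ≤ W2sq ν ρ := W2sq_swap_le ν ρ
  linarith [hW1, hW2, hW3, hEq, hint_le, hfX_eq, hfY_eq]
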